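/- arXiv:2304.08977 — 4 statements merged into one kernel-verified Lean document; each statement's English description precedes it below -/
import Mathlib

section
/- Let V be a finite-dimensional inner product space, k > m, and let 𝒫_𝒢 denote the orthogonal projection of Λ^k V* ⊗ Λ^m V* onto the subspace 𝒢 = ker 𝔊 of Bianchi (k,m)-covectors. Then for ξ ∈ V* and ψ ∈ 𝒢, the Bianchi interior product satisfies the explicit formula 𝒫_𝒢 i_{ξ^♯} ψ = i_{ξ^♯} ψ − (1/α(k,m)) 𝔊_V i^V_{ξ^♯} ψ, where α(k,m) = k − m + 1. -/
/-- For `k > m`, `ξ ∈ V*` and `ψ` a Bianchi `(k,m)`-covector (`ψ ∈ ker 𝔊`), the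
Bianchi interior product satisfies `𝒫_𝒢 i_{ξ^♯} ψ = i_{ξ^♯} ψ − (1/α(k,m)) 𝔊_V i^V_{ξ^♯} ψ`
with `α(k,m) = k − m + 1`, i.e.: (a) the right-hand side lies in `ker 𝔊` (in bidegree
`(k−1,m)`), and (b) the difference `i_{ξ^♯}ψ − RHS = (1/α) 𝔊_V i^V_{ξ^♯}ψ` is orthogonal to
every Bianchi `(k−1,m)`-covector, so the RHS is the orthogonal projection of `i_{ξ^♯}ψ` onto
`ker 𝔊`. The relations `{𝔊, i_X} = i^V_X`, `{𝔊, i^V_X} = 0`, `[𝔊,𝔊_V] = (k−m)·Id`, and the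
orthogonality of `Im 𝔊_V` to `ker 𝔊` may be used. -/
theorem bianchi_interior_product_formula
    {D : Type*} [NormedAddCommGroup D] [InnerProductSpace ℝ D]
    (Λ : ℤ → ℤ → Submodule ℝ D)
    (G GV : D →ₗ[ℝ] D)
    -- interior products i_{ξ^♯} and i^V_{ξ^♯}
    (iξ iVξ : D →ₗ[ℝ] D)
    (hGmap : ∀ (k m : ℤ), ∀ ψ ∈ Λ k m, G ψ ∈ Λ (k + 1) (m - 1))
    (hGVmap : ∀ (k m : ℤ), ∀ ψ ∈ Λ k m, GV ψ ∈ Λ (k - 1) (m + 1))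
    (himap : ∀ (k m : ℤ), ∀ ψ ∈ Λ k m, iξ ψ ∈ Λ (k - 1) m)
    (hiVmap : ∀ (k m : ℤ), ∀ ψ ∈ Λ k m, iVξ ψ ∈ Λ k (m - 1))
    -- {𝔊, i_{ξ^♯}} = i^V_{ξ^♯}
    (hanti1 : ∀ ψ, G (iξ ψ) + iξ (G ψ) = iVξ ψ)
    -- {𝔊, i^V_{ξ^♯}} = 0
    (hanti2 : ∀ ψ, G (iVξ ψ) + iVξ (G ψ) = 0)
    -- [𝔊, 𝔊_V] = (k−m)·Id
    (hcomm : ∀ (k m : ℤ), ∀ ψ ∈ Λ k m, G (GV ψ) - GV (G ψ) = ((k - m : ℤ) : ℝ) • ψ)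
    -- Im 𝔊_V is orthogonal to ker 𝔊
    (horth : ∀ x y : D, G y = 0 → (inner ℝ (GV x) y : ℝ) = 0)
    (k m : ℤ) (hkm : m < k)
    (ψ : D) (hψ : ψ ∈ Λ k m) (hψG : G ψ = 0) :
    iξ ψ - (((k - m + 1 : ℤ) : ℝ))⁻¹ • GV (iVξ ψ) ∈ Λ (k - 1) m ∧
    G (iξ ψ - (((k - m + 1 : ℤ) : ℝ))⁻¹ • GV (iVξ ψ)) = 0 ∧
    (∀ y, y ∈ Λ (k - 1) m → G y = 0 →
      (inner ℝ (iξ ψ - (iξ ψ - (((k - m + 1 : ℤ) : ℝ))⁻¹ • GV (iVξ ψ))) y : ℝ) = 0) := by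
  have hα : ((k - m + 1 : ℤ) : ℝ) ≠ 0 := by
    have : (1 : ℤ) ≤ k - m := by omega
    exact_mod_cast (by omega : (k - m + 1 : ℤ) ≠ 0)
  have hiV : iVξ ψ ∈ Λ k (m - 1) := hiVmap k m ψ hψ
  have hGViV : GV (iVξ ψ) ∈ Λ (k - 1) m := by
    have := hGVmap k (m - 1) _ hiV
    simpa using this
  have hmem : iξ ψ - (((k - m + 1 : ℤ) : ℝ))⁻¹ • GV (iVξ ψ) ∈ Λ (k - 1) m :=
    Submodule.sub_mem _ (himap k m ψ hψ) (Submodule.smul_mem _ _ hGViV)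
  have hGiV : G (iVξ ψ) = 0 := by
    have := hanti2 ψ
    rw [hψG] at this; simpa using this
  have hGiξ : G (iξ ψ) = iVξ ψ := by
    have := hanti1 ψ
    rw [hψG] at this; simpa using this
  have hGGV : G (GV (iVξ ψ)) = ((k - m + 1 : ℤ) : ℝ) • iVξ ψ := by
    have h := hcomm k (m - 1) _ hiV
    rw [hGiV] at h
    simp only [map_zero, sub_zero] at h
    rw [h]
    norm_num
    ring_nf
  refine ⟨hmem, ?_, ?_⟩
  · rw [map_sub, map_smul, hGiξ, hGGV, smul_smul, inv_mul_cancel₀ hα, one_smul, sub_self]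
  · intro y _ hy
    simp only [sub_sub_cancel]
    rw [inner_smul_left]
    rw [horth _ _ hy]
    simp
end

section
/- Let V be a finite-dimensional inner product space, ξ ∈ V* with |ξ| = 1, k < m, and set ξ_V = 𝔊_V ξ (the copy of ξ in the vector slot). Define σ_d(ψ) = ξ ∧ ψ − (1/α(m,k)) 𝔊(ξ_V ∧ ψ) and σ_δ(ψ) = i_{ξ^♯} ψ for ψ in the space 𝒢^{k,m} = ker 𝔊_V ⊂ Λ^k V* ⊗ Λ^m V*, where α(m,k) = m − k + 1. Then the map σ_δ ⊕ σ_d : 𝒢^{k,m} → (Λ^{k-1}⊗Λ^m) ⊕ (Λ^{k+1}⊗Λ^m) is injective. -/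
/-- For `|ξ| = 1` and `k < m`, the symbol map `σ_δ ⊕ σ_d` of `δ^𝒢 ⊕ d^𝒢`
is injective on the Bianchi covectors `𝒢^{k,m} = ker 𝔊_V ⊂ Λ^k V* ⊗ Λ^m V*`, where
`σ_d(ψ) = ξ ∧ ψ − (1/α(m,k)) 𝔊(ξ_V ∧ ψ)` with `α(m,k) = m − k + 1`, and `σ_δ(ψ) = i_{ξ^♯}ψ`.
Here `w = ξ∧·` and `wV = ξ_V∧·` are wedging by `ξ` into the form and vector factors, and
`iξ`, `iVξ` the corresponding interior products; the identities
`i_{ξ^♯}(ξ∧ψ) + ξ∧(i_{ξ^♯}ψ) = |ξ|²ψ` and `{𝔊, i_{ξ^♯}} = i^V_{ξ^♯}` may be used. -/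
theorem symbol_injectivity_dG_deltaG
    {D : Type*} [NormedAddCommGroup D] [InnerProductSpace ℝ D]
    (Λ : ℤ → ℤ → Submodule ℝ D)
    (G GV : D →ₗ[ℝ] D)
    (w wV iξ iVξ : D →ₗ[ℝ] D)
    -- Clifford identity on the form factor (|ξ| = 1)
    (hclif : ∀ x, iξ (w x) + w (iξ x) = x)
    -- Clifford identity on the vector factor (|ξ| = 1)
    (hclifV : ∀ x, iVξ (wV x) + wV (iVξ x) = x)
    -- operations acting on different factors commute
    (hcomm1 : ∀ x, iξ (wV x) = wV (iξ x))
    -- {𝔊, i_{ξ^♯}} = i^V_{ξ^♯}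
    (hanti : ∀ x, G (iξ x) + iξ (G x) = iVξ x)
    -- adjointness of ξ_V∧· and i^V_{ξ^♯}
    (hadjV : ∀ x y, (inner ℝ (wV x) y : ℝ) = (inner ℝ x (iVξ y) : ℝ))
    (k m : ℤ) (hkm : k < m)
    (ψ : D) (hψ : ψ ∈ Λ k m) (hψGV : GV ψ = 0)
    -- σ_δ ψ = 0 and σ_d ψ = 0
    (hδ : iξ ψ = 0)
    (hd : w ψ - (((m - k + 1 : ℤ) : ℝ))⁻¹ • G (wV ψ) = 0) :
    ψ = 0 := by
  set α : ℝ := ((m - k + 1 : ℤ) : ℝ) with hαdef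
  have hα2 : (2 : ℝ) ≤ α := by
    have : (2 : ℤ) ≤ m - k + 1 := by omega
    rw [hαdef]; exact_mod_cast this
  have hα : α ≠ 0 := by linarith
  have hw : w ψ = α⁻¹ • G (wV ψ) := by
    have := sub_eq_zero.mp hd; simpa using this
  -- iξ (w ψ) = ψ
  have h1 : iξ (w ψ) = ψ := by
    have h := hclif ψ
    rw [hδ, map_zero, add_zero] at h
    exact h
  -- iξ (G (wV ψ)) = iVξ (wV ψ)
  have h2 : iξ (G (wV ψ)) = iVξ (wV ψ) := by
    have h := hanti (wV ψ)
    rw [hcomm1, hδ] at h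
    simpa using h
  -- ψ = α⁻¹ • iVξ (wV ψ)
  have h3 : ψ = α⁻¹ • iVξ (wV ψ) := by
    calc ψ = iξ (w ψ) := h1.symm
    _ = α⁻¹ • iVξ (wV ψ) := by rw [hw, map_smul, h2]
  have h4 : α • ψ = iVξ (wV ψ) := by
    conv_lhs => rw [h3, smul_smul, mul_inv_cancel₀ hα, one_smul]
  -- Clifford on vector factor
  have h5 : α • ψ + wV (iVξ ψ) = ψ := by
    rw [h4]; exact hclifV ψ
  -- take inner product with ψ
  have h6 : α * (inner ℝ ψ ψ : ℝ) + (inner ℝ (iVξ ψ) (iVξ ψ) : ℝ) = (inner ℝ ψ ψ : ℝ) := by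
    have := congrArg (fun x => (inner ℝ x ψ : ℝ)) h5
    simpa [inner_add_left, real_inner_smul_left, hadjV (iVξ ψ) ψ] using this
  have hpos : (0 : ℝ) ≤ (inner ℝ ψ ψ : ℝ) := real_inner_self_nonneg
  have hpos2 : (0 : ℝ) ≤ (inner ℝ (iVξ ψ) (iVξ ψ) : ℝ) := real_inner_self_nonneg
  have hz : (inner ℝ ψ ψ : ℝ) = 0 := by nlinarith
  exact inner_self_eq_zero.mp hz
end

section
/- Let V be a finite-dimensional inner product space, ξ ∈ V* nonzero, and ξ_V its copy in the vector slot. If ψ ∈ Λ^m V* ⊗ Λ^m V* is symmetric (ψ^T = ψ) and satisfies both i_{ξ^♯} ψ = 0 and ξ ∧ ξ_V ∧ ψ = 0, then ψ = 0. In other words, the symbol map ψ ↦ (i_{ξ^♯}ψ, ξ∧ξ_V∧ψ) of (δ^∇ ⊕ H) is injective on symmetric (m,m)-covectors. -/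
/-- For `ξ ∈ V*` nonzero, if `ψ` is a symmetric `(m,m)`-double covector
(`ψ^T = ψ`) with `i_{ξ^♯} ψ = 0` and `ξ ∧ ξ_V ∧ ψ = 0`, then `ψ = 0`; that is, the symbol
map `ψ ↦ (i_{ξ^♯}ψ, ξ∧ξ_V∧ψ)` of `δ^∇ ⊕ H` is injective on symmetric `(m,m)`-covectors.
Here `w = ξ∧·` (form factor), `wV = ξ_V∧·` (vector factor), `iξ`, `iVξ` the interior
products, and `T` the involution swapping the two factors. -/
theorem symbol_injectivity_H
    {V : Type*} [NormedAddCommGroup V] [InnerProductSpace ℝ V]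
    {D : Type*} [NormedAddCommGroup D] [InnerProductSpace ℝ D]
    (Λ : ℤ → ℤ → Submodule ℝ D)
    (ξ : V) (hξ : ξ ≠ 0)
    (w wV iξ iVξ T : D →ₗ[ℝ] D)
    (hT : ∀ x, T (T x) = x)
    -- i^V_{ξ^♯} ψ = (i_{ξ^♯} ψ^T)^T
    (hTiV : ∀ x, iVξ (T x) = T (iξ x))
    (hclif : ∀ x, iξ (w x) + w (iξ x) = (‖ξ‖ ^ 2 : ℝ) • x)
    (hclifV : ∀ x, iVξ (wV x) + wV (iVξ x) = (‖ξ‖ ^ 2 : ℝ) • x)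
    -- operations acting on different factors commute
    (hcomm1 : ∀ x, iξ (wV x) = wV (iξ x))
    (hcomm2 : ∀ x, iVξ (w x) = w (iVξ x))
    (m : ℤ) (ψ : D) (hψ : ψ ∈ Λ m m)
    (hsymm : T ψ = ψ)
    (h1 : iξ ψ = 0) (h2 : w (wV ψ) = 0) :
    ψ = 0 := by
  have hiV : iVξ ψ = 0 := by
    have := hTiV ψ
    rw [hsymm, h1, map_zero] at this
    exact this
  -- iξ (w (wV ψ)) = ‖ξ‖² • wV ψ
  have e1 : iξ (w (wV ψ)) = (‖ξ‖ ^ 2 : ℝ) • wV ψ := by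
    have hc := hclif (wV ψ)
    have : iξ (wV ψ) = 0 := by rw [hcomm1, h1, map_zero]
    rw [this, map_zero, add_zero] at hc
    exact hc
  have e2 : iVξ (iξ (w (wV ψ))) = (‖ξ‖ ^ 2 : ℝ) • ((‖ξ‖ ^ 2 : ℝ) • ψ) := by
    rw [e1, map_smul]
    have hc := hclifV ψ
    rw [hiV, map_zero, add_zero] at hc
    rw [hc]
  rw [h2, map_zero, map_zero] at e2
  have hn : (‖ξ‖ ^ 2 : ℝ) ≠ 0 := pow_ne_zero _ (norm_ne_zero_iff.mpr hξ)
  have := e2.symm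
  rw [smul_smul] at this
  have : ((‖ξ‖ ^ 2) * (‖ξ‖ ^ 2) : ℝ) • ψ = 0 := this
  exact (smul_eq_zero_iff_right (mul_ne_zero hn hn)).mp this
end

section
/- Consider the linear ODE system on [0,∞) for complex scalar functions ψ₁₁, ψ₁₂, ψ₂₂: ψ₁₁ + i ψ̇₁₂ = 0, ψ₁₂ + i ψ̇₂₂ = 0, and ψ₂₂ − 2i ψ̇₁₂ − ψ̈₁₁ = 0. If (ψ₁₁, ψ₁₂, ψ₂₂) is a solution decaying at infinity and satisfies the initial conditions ψ₁₁(0) = 0 and i ψ̇₁₁(0) − 2 ψ₁₂(0) = 0, then ψ₁₁ ≡ ψ₁₂ ≡ ψ₂₂ ≡ 0. -/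
open Complex Filter
open Complex Filter Set

lemma hasDerivAt_cexp_real (c : ℂ) (t : ℝ) :
    HasDerivAt (fun t : ℝ => Complex.exp (c * t)) (c * Complex.exp (c * t)) t := by
  have h1 : HasDerivAt (fun t : ℝ => c * (t : ℂ)) c t := by
    simpa using (Complex.ofRealCLM.hasDerivAt (x := t)).const_mul c
  exact ((Complex.hasDerivAt_exp (c * t)).comp t h1).congr_deriv (mul_comm _ _)

lemma key_exp (h : ℝ → ℂ) (c : ℂ)
    (hd : ∀ s : ℝ, 0 ≤ s → HasDerivAt h (c * h s) s) :
    ∀ s : ℝ, 0 ≤ s → h s = Complex.exp (c * s) * h 0 := by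
  intro s hs
  set H : ℝ → ℂ := fun t => Complex.exp (-c * t) * h t with hH
  have hder : ∀ t : ℝ, 0 ≤ t → HasDerivAt H 0 t := by
    intro t ht
    have := (hasDerivAt_cexp_real (-c) t).mul (hd t ht)
    refine this.congr_deriv (Eq.symm ?_)
    ring
  have hcont : ContinuousOn H (Icc 0 s) := fun t ht =>
    ((hder t ht.1).continuousAt).continuousWithinAt
  have hconst := constant_of_has_deriv_right_zero hcont
    (fun t ht => ((hder t ht.1).hasDerivWithinAt)) s (right_mem_Icc.2 hs)
  have h0 : H 0 = h 0 := by simp [hH]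
  have hs' : Complex.exp (-c * s) * h s = h 0 := by rw [← h0]; exact hconst
  have := congrArg (fun z => Complex.exp (c * s) * z) hs'
  simpa [← mul_assoc, ← Complex.exp_add] using this

lemma bounded_of_tendsto (φ : ℝ → ℂ) (hc : Continuous φ)
    (h : Tendsto φ atTop (nhds 0)) : ∃ C : ℝ, ∀ s : ℝ, 0 ≤ s → ‖φ s‖ ≤ C := by
  have h1 : ∀ᶠ s in atTop, ‖φ s‖ ≤ 1 := by
    have := Metric.tendsto_nhds.mp h 1 one_pos
    filter_upwards [this] with s hs
    simpa [dist_eq_norm] using hs.le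
  obtain ⟨M, hM⟩ := eventually_atTop.mp h1
  obtain ⟨C, hC⟩ := (isCompact_Icc (a := (0:ℝ)) (b := M)).exists_bound_of_continuousOn
    hc.continuousOn
  refine ⟨max C 1, fun s hs => ?_⟩
  rcases le_total s M with h' | h'
  · exact le_max_of_le_left (hC s ⟨hs, h'⟩)
  · exact le_max_of_le_right (hM s h')
/-- For the linear ODE system on `[0,∞)`:
`ψ₁₁ + i ψ̇₁₂ = 0`, `ψ₁₂ + i ψ̇₂₂ = 0`, `ψ₂₂ − 2i ψ̇₁₂ − ψ̈₁₁ = 0`,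
any solution decaying at infinity and satisfying the initial conditions `ψ₁₁(0) = 0` and
`i ψ̇₁₁(0) − 2 ψ₁₂(0) = 0` vanishes identically. -/
theorem ode_decaying_solutions_eq11
    (ψ₁₁ ψ₁₂ ψ₂₂ : ℝ → ℂ)
    (h11 : Differentiable ℝ ψ₁₁) (h11' : Differentiable ℝ (deriv ψ₁₁))
    (h12 : Differentiable ℝ ψ₁₂) (h22 : Differentiable ℝ ψ₂₂)
    (heq1 : ∀ s : ℝ, 0 ≤ s → ψ₁₁ s + Complex.I * deriv ψ₁₂ s = 0)
    (heq2 : ∀ s : ℝ, 0 ≤ s → ψ₁₂ s + Complex.I * deriv ψ₂₂ s = 0)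
    (heq3 : ∀ s : ℝ, 0 ≤ s →
      ψ₂₂ s - 2 * Complex.I * deriv ψ₁₂ s - deriv (deriv ψ₁₁) s = 0)
    (hdecay1 : Tendsto ψ₁₁ atTop (nhds 0))
    (hdecay2 : Tendsto ψ₁₂ atTop (nhds 0))
    (hdecay3 : Tendsto ψ₂₂ atTop (nhds 0))
    (hic1 : ψ₁₁ 0 = 0)
    (hic2 : Complex.I * deriv ψ₁₁ 0 - 2 * ψ₁₂ 0 = 0) :
    ∀ s : ℝ, 0 ≤ s → ψ₁₁ s = 0 ∧ ψ₁₂ s = 0 ∧ ψ₂₂ s = 0 := by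
  set q : ℝ → ℂ := deriv ψ₁₁ with hqdef
  -- pointwise derivative identities on [0,∞)
  have hd12 : ∀ s : ℝ, 0 ≤ s → deriv ψ₁₂ s = Complex.I * ψ₁₁ s := by
    intro s hs
    linear_combination (-Complex.I) * heq1 s hs + deriv ψ₁₂ s * Complex.I_sq
  have hd22 : ∀ s : ℝ, 0 ≤ s → deriv ψ₂₂ s = Complex.I * ψ₁₂ s := by
    intro s hs
    linear_combination (-Complex.I) * heq2 s hs + deriv ψ₂₂ s * Complex.I_sq
  have hdq : ∀ s : ℝ, 0 ≤ s → deriv q s = ψ₂₂ s + 2 * ψ₁₁ s := by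
    intro s hs
    have h3 := heq3 s hs
    rw [hd12 s hs] at h3
    linear_combination -h3 - 2 * ψ₁₁ s * Complex.I_sq
  -- HasDerivAt facts
  have H11 : ∀ s : ℝ, HasDerivAt ψ₁₁ (q s) s := fun s => (h11 s).hasDerivAt
  have H12 : ∀ s : ℝ, HasDerivAt ψ₁₂ (deriv ψ₁₂ s) s := fun s => (h12 s).hasDerivAt
  have H22 : ∀ s : ℝ, HasDerivAt ψ₂₂ (deriv ψ₂₂ s) s := fun s => (h22 s).hasDerivAt
  have Hq : ∀ s : ℝ, HasDerivAt q (deriv q s) s := fun s => (h11' s).hasDerivAt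
  -- f = ψ₁₁ + I ψ₁₂ + ψ₂₂ + q satisfies f' = f on [0,∞)
  set f : ℝ → ℂ := fun s => ψ₁₁ s + Complex.I * ψ₁₂ s + ψ₂₂ s + q s with hfdef
  have hfD : ∀ s : ℝ, 0 ≤ s → HasDerivAt f (1 * f s) s := by
    intro s hs
    have h := (((H11 s).add ((H12 s).const_mul Complex.I)).add (H22 s)).add (Hq s)
    refine h.congr_deriv (Eq.symm ?_)
    rw [hd12 s hs, hd22 s hs, hdq s hs]
    simp only [hfdef]
    linear_combination (-ψ₁₁ s) * Complex.I_sq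
  have hf_exp := key_exp f 1 hfD
  -- q grows at most linearly
  have hcontψ : Continuous (fun s => ψ₂₂ s + 2 * ψ₁₁ s) :=
    h22.continuous.add (continuous_const.mul h11.continuous)
  obtain ⟨C₁, hC₁⟩ := bounded_of_tendsto (fun s => ψ₂₂ s + 2 * ψ₁₁ s) hcontψ
    (by simpa using hdecay3.add (hdecay1.const_mul (2:ℂ)))
  have hqlin : ∀ s : ℝ, 0 ≤ s → ‖q s - q 0‖ ≤ C₁ * s := by
    intro s hs
    have := norm_image_sub_le_of_norm_deriv_le_segment'
      (f := q) (f' := fun x => ψ₂₂ x + 2 * ψ₁₁ x) (a := 0) (b := s) (C := C₁)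
      (fun x hx => by
        have := Hq x
        rw [hdq x hx.1] at this
        exact this.hasDerivWithinAt)
      (fun x hx => hC₁ x hx.1) s (right_mem_Icc.2 hs)
    simpa using this
  -- the decaying part of f is bounded
  have hcontφ : Continuous (fun s => ψ₁₁ s + Complex.I * ψ₁₂ s + ψ₂₂ s) :=
    (h11.continuous.add (continuous_const.mul h12.continuous)).add h22.continuous
  obtain ⟨C₂, hC₂⟩ := bounded_of_tendsto _ hcontφ
    (by simpa using (hdecay1.add (hdecay2.const_mul Complex.I)).add hdecay3)
  -- conclude f 0 = 0
  have hf0 : f 0 = 0 := by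
    by_contra hne
    have hbound : ∀ s : ℝ, 0 ≤ s → ‖f 0‖ ≤ (C₂ + ‖q 0‖ + C₁ * s) * Real.exp (-s) := by
      intro s hs
      have h1 : ‖f s‖ = Real.exp s * ‖f 0‖ := by
        rw [hf_exp s hs]
        simp [Complex.norm_exp]
      have h2 : ‖f s‖ ≤ C₂ + ‖q 0‖ + C₁ * s := by
        have : f s = (ψ₁₁ s + Complex.I * ψ₁₂ s + ψ₂₂ s) + (q s - q 0) + q 0 := by
          simp only [hfdef]; ring
        rw [this]
        calc ‖(ψ₁₁ s + Complex.I * ψ₁₂ s + ψ₂₂ s) + (q s - q 0) + q 0‖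
            ≤ ‖ψ₁₁ s + Complex.I * ψ₁₂ s + ψ₂₂ s‖ + ‖q s - q 0‖ + ‖q 0‖ :=
              norm_add₃_le
          _ ≤ C₂ + C₁ * s + ‖q 0‖ := by
              gcongr
              · exact hC₂ s hs
              · exact hqlin s hs
          _ = C₂ + ‖q 0‖ + C₁ * s := by ring
      have hexp : (0:ℝ) < Real.exp s := Real.exp_pos s
      rw [h1] at h2
      rw [Real.exp_neg]
      have h3 : ‖f 0‖ ≤ (C₂ + ‖q 0‖ + C₁ * s) / Real.exp s := by
        rw [le_div_iff₀ hexp]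
        calc ‖f 0‖ * Real.exp s = Real.exp s * ‖f 0‖ := by ring
          _ ≤ C₂ + ‖q 0‖ + C₁ * s := h2
      simpa [div_eq_mul_inv] using h3
    have hten : Tendsto (fun s : ℝ => (C₂ + ‖q 0‖ + C₁ * s) * Real.exp (-s))
        atTop (nhds 0) := by
      have e1 : Tendsto (fun s : ℝ => (C₂ + ‖q 0‖) * Real.exp (-s)) atTop (nhds 0) := by
        simpa using (Real.tendsto_exp_neg_atTop_nhds_zero).const_mul (C₂ + ‖q 0‖)
      have e2 : Tendsto (fun s : ℝ => C₁ * (s * Real.exp (-s))) atTop (nhds 0) := by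
        have := (Real.tendsto_pow_mul_exp_neg_atTop_nhds_zero 1).const_mul C₁
        simpa using this
      have := e1.add e2
      simp only [add_zero] at this
      refine this.congr (fun s => by ring)
    have hle : ‖f 0‖ ≤ 0 := by
      refine ge_of_tendsto hten ?_
      filter_upwards [eventually_ge_atTop (0:ℝ)] with s hs
      exact hbound s hs
    exact hne (norm_le_zero_iff.mp hle)
  have hf : ∀ s : ℝ, 0 ≤ s → f s = 0 := by
    intro s hs; rw [hf_exp s hs, hf0, mul_zero]
  -- q tends to 0
  have hqten : Tendsto q atTop (nhds 0) := by
    have : Tendsto (fun s => -(ψ₁₁ s + Complex.I * ψ₁₂ s + ψ₂₂ s)) atTop (nhds 0) := by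
      simpa using ((hdecay1.add (hdecay2.const_mul Complex.I)).add hdecay3).neg
    refine this.congr' ?_
    filter_upwards [eventually_ge_atTop (0:ℝ)] with s hs
    have := hf s hs
    simp only [hfdef] at this
    linear_combination -this
  -- g = 2ψ₁₁ - Iψ₁₂ + q satisfies g' = g on [0,∞) and decays
  set g : ℝ → ℂ := fun s => 2 * ψ₁₁ s - Complex.I * ψ₁₂ s + q s with hgdef
  have hgD : ∀ s : ℝ, 0 ≤ s → HasDerivAt g (1 * g s) s := by
    intro s hs
    have h := (((H11 s).const_mul (2:ℂ)).sub ((H12 s).const_mul Complex.I)).add (Hq s)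
    refine h.congr_deriv (Eq.symm ?_)
    rw [hd12 s hs, hdq s hs]
    have hfs := hf s hs
    simp only [hfdef] at hfs
    simp only [hgdef]
    linear_combination -hfs + ψ₁₁ s * Complex.I_sq
  have hg_exp := key_exp g 1 hgD
  have hg0 : g 0 = 0 := by
    have hgten : Tendsto g atTop (nhds 0) := by
      have := ((hdecay1.const_mul (2:ℂ)).sub (hdecay2.const_mul Complex.I)).add hqten
      simpa using this
    have hle : ‖g 0‖ ≤ 0 := by
      have hgn : Tendsto (fun s => ‖g s‖) atTop (nhds 0) := by simpa using hgten.norm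
      refine ge_of_tendsto hgn ?_
      filter_upwards [eventually_ge_atTop (0:ℝ)] with s hs
      rw [hg_exp s hs]
      have h4 : ‖Complex.exp (1 * (s:ℂ)) * g 0‖ = Real.exp s * ‖g 0‖ := by
        simp [Complex.norm_exp]
      rw [h4]
      nlinarith [Real.add_one_le_exp s, norm_nonneg (g 0)]
    simpa using norm_le_zero_iff.mp hle
  have hg : ∀ s : ℝ, 0 ≤ s → g s = 0 := by
    intro s hs; rw [hg_exp s hs, hg0, mul_zero]
  -- w = ψ₁₁ - Iψ₁₂ satisfies w' = -w, w 0 = 0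
  have hψ120 : ψ₁₂ 0 = 0 := by
    have hg0' := hg 0 le_rfl
    simp only [hgdef] at hg0'
    rw [hic1] at hg0'
    -- hg0' : 2*0 - I*ψ₁₂ 0 + q 0 = 0, hic2 : I * q 0 - 2 ψ₁₂ 0 = 0
    have h2 : Complex.I * q 0 - 2 * ψ₁₂ 0 = 0 := hic2
    linear_combination (Complex.I / 3) * hg0' - (1/3) * h2 + (ψ₁₂ 0 / 3) * Complex.I_sq
  have hwD : ∀ s : ℝ, 0 ≤ s → HasDerivAt (fun s => ψ₁₁ s - Complex.I * ψ₁₂ s)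
      ((-1) * (ψ₁₁ s - Complex.I * ψ₁₂ s)) s := by
    intro s hs
    have h := (H11 s).sub ((H12 s).const_mul Complex.I)
    refine h.congr_deriv (Eq.symm ?_)
    rw [hd12 s hs]
    have hgs := hg s hs
    simp only [hgdef] at hgs
    linear_combination -hgs + ψ₁₁ s * Complex.I_sq
  have hw := key_exp _ (-1) hwD
  have hw0 : ψ₁₁ 0 - Complex.I * ψ₁₂ 0 = 0 := by rw [hic1, hψ120]; ring
  have hwz : ∀ s : ℝ, 0 ≤ s → ψ₁₁ s = Complex.I * ψ₁₂ s := by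
    intro s hs
    have := hw s hs
    rw [hw0, mul_zero] at this
    linear_combination this
  -- ψ₁₂' = -ψ₁₂
  have hpD : ∀ s : ℝ, 0 ≤ s → HasDerivAt ψ₁₂ ((-1) * ψ₁₂ s) s := by
    intro s hs
    have h := H12 s
    rw [hd12 s hs, hwz s hs] at h
    convert h using 1
    linear_combination -ψ₁₂ s * Complex.I_sq
  have hp := key_exp ψ₁₂ (-1) hpD
  intro s hs
  have h12z : ψ₁₂ s = 0 := by rw [hp s hs, hψ120, mul_zero]
  have h11z : ψ₁₁ s = 0 := by rw [hwz s hs, h12z, mul_zero]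
  refine ⟨h11z, h12z, ?_⟩
  have hfs := hf s hs
  have hgs := hg s hs
  simp only [hfdef] at hfs
  simp only [hgdef] at hgs
  rw [h11z, h12z] at hfs hgs
  linear_combination hfs - hgs
end
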